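/- Let K be a group acting linearly on a complex vector space V, and suppose the induced representation of K on the polynomial algebra ℂ[V] is multiplicity free (each irreducible K-representation occurs at most once). Let W ⊆ V be a K-stable subspace with a K-stable complement, so restriction of polynomials gives a K-equivariant surjection ℂ[V] → ℂ[W]. If an irreducible K-subrepresentation U of ℂ[W] consists of homogeneous polynomials of degree d, and U also occurs in ℂ[V], then under the identification ℂ[W] ⊆ ℂ[V] the copy of U in ℂ[V] also consists of homogeneous polynomials of degree d in the W-variables only. -/

import Mathlib

open MvPolynomial

/-- Suppose a group `K` acts linearly on `V = W ⊕ W'` (with `W`-coordinates `ι`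
and `W'`-coordinates `ι'`), preserving both summands, so that restriction of
polynomials (evaluation of the `W'`-variables at `0`) is a `K`-equivariant
surjection `ℂ[V] → ℂ[W]`.  If the representation of `K` on `ℂ[V]` is
multiplicity free and `U ⊆ ℂ[W]` is an irreducible `K`-subrepresentation
consisting of homogeneous polynomials of degree `d` which also occurs in
`ℂ[V]`, then any copy of `U` in `ℂ[V]` consists of homogeneous polynomials of
degree `d` in the `W`-variables only. -/
theorem copy_in_bigger_polynomial_algebra_is_homogeneous
    {K : Type*} [Group K] {ι ι' : Type*} [Finite ι] [Finite ι']
    (ρ : K →* (MvPolynomial (ι ⊕ ι') ℂ ≃ₐ[ℂ] MvPolynomial (ι ⊕ ι') ℂ))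
    (ρW : K →* (MvPolynomial ι ℂ ≃ₐ[ℂ] MvPolynomial ι ℂ))
    -- `K` acts linearly, preserving the span of the `W`-variables …
    (hlinW : ∀ (k : K) (i : ι), ρ k (X (Sum.inl i)) ∈
      Submodule.span ℂ (Set.range fun i' : ι => (X (Sum.inl i') : MvPolynomial (ι ⊕ ι') ℂ)))
    -- … and the span of the `W'`-variables
    (hlinW' : ∀ (k : K) (j : ι'), ρ k (X (Sum.inr j)) ∈
      Submodule.span ℂ (Set.range fun j' : ι' => (X (Sum.inr j') : MvPolynomial (ι ⊕ ι') ℂ)))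
    -- restriction `ℂ[V] → ℂ[W]` is `K`-equivariant
    (hres : ∀ (k : K) (p : MvPolynomial (ι ⊕ ι') ℂ),
      aeval (Sum.elim X fun _ : ι' => (0 : MvPolynomial ι ℂ)) (ρ k p) =
        ρW k (aeval (Sum.elim X fun _ : ι' => (0 : MvPolynomial ι ℂ)) p))
    -- the representation of `K` on `ℂ[V]` is multiplicity free
    (hmf : ∀ U₁ U₂ : Submodule ℂ (MvPolynomial (ι ⊕ ι') ℂ),
      ∀ (h1 : ∀ (k : K) p, p ∈ U₁ → ρ k p ∈ U₁) (h2 : ∀ (k : K) p, p ∈ U₂ → ρ k p ∈ U₂),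
      (∀ W ≤ U₁, (∀ (k : K) p, p ∈ W → ρ k p ∈ W) → W = ⊥ ∨ W = U₁) →
      (∀ W ≤ U₂, (∀ (k : K) p, p ∈ W → ρ k p ∈ W) → W = ⊥ ∨ W = U₂) →
      U₁ ≠ ⊥ →
      (∃ e : U₁ ≃ₗ[ℂ] U₂, ∀ (k : K) p (hp : p ∈ U₁),
        (e ⟨ρ k p, h1 k p hp⟩ : MvPolynomial (ι ⊕ ι') ℂ) = ρ k (e ⟨p, hp⟩)) →
      U₁ = U₂)
    -- `U ⊆ ℂ[W]` irreducible invariant, homogeneous of degree `d`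
    (U : Submodule ℂ (MvPolynomial ι ℂ)) (d : ℕ)
    (hUinv : ∀ (k : K) p, p ∈ U → ρW k p ∈ U) (hUne : U ≠ ⊥)
    (hUirr : ∀ W ≤ U, (∀ (k : K) p, p ∈ W → ρW k p ∈ W) → W = ⊥ ∨ W = U)
    (hUhom : ∀ p ∈ U, MvPolynomial.IsHomogeneous p d)
    -- a copy of `U` occurring in `ℂ[V]`
    (Ubig : Submodule ℂ (MvPolynomial (ι ⊕ ι') ℂ))
    (hUbiginv : ∀ (k : K) p, p ∈ Ubig → ρ k p ∈ Ubig)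
    (e : Ubig ≃ₗ[ℂ] U)
    (he : ∀ (k : K) p (hp : p ∈ Ubig),
      (e ⟨ρ k p, hUbiginv k p hp⟩ : MvPolynomial ι ℂ) = ρW k (e ⟨p, hp⟩)) :
    ∀ p ∈ Ubig, MvPolynomial.IsHomogeneous p d ∧
      p ∈ Set.range (rename (Sum.inl : ι → ι ⊕ ι')) := by
  classical
  set j : MvPolynomial ι ℂ →ₐ[ℂ] MvPolynomial (ι ⊕ ι') ℂ :=
    rename (Sum.inl : ι → ι ⊕ ι') with hjdef
  set r : MvPolynomial (ι ⊕ ι') ℂ →ₐ[ℂ] MvPolynomial ι ℂ :=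
    aeval (Sum.elim X fun _ : ι' => (0 : MvPolynomial ι ℂ)) with hrdef
  have hinj : Function.Injective j := rename_injective _ Sum.inl_injective
  have hrj : ∀ p, r (j p) = p := by
    intro p
    simp only [hjdef, hrdef, aeval_rename]
    have : (Sum.elim X (fun _ : ι' => (0 : MvPolynomial ι ℂ))) ∘ Sum.inl
        = (X : ι → MvPolynomial ι ℂ) := by
      funext i; rfl
    rw [this]
    exact aeval_X_left_apply p
  -- `ρ k` preserves the subalgebra of polynomials in the `W`-variables
  have hmem : ∀ (k : K) (p : MvPolynomial ι ℂ), ρ k (j p) ∈ j.range := by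
    intro k p
    induction p using MvPolynomial.induction_on with
    | C a =>
        have : j (C a) = C a := by simp [hjdef]
        rw [this]
        have : (ρ k) (C a) = C a := by
          have := (ρ k).commutes a
          simpa [algebraMap_eq] using this
        rw [this]
        exact ⟨C a, by simp [hjdef]⟩
    | add p q hp hq =>
        rw [map_add, map_add]
        exact add_mem hp hq
    | mul_X p i hp =>
        rw [map_mul, map_mul]
        refine mul_mem hp ?_
        have h1 : j (X i) = X (Sum.inl i) := by simp [hjdef]
        rw [h1]
        have hspan : Submodule.span ℂ
            (Set.range fun i' : ι => (X (Sum.inl i') : MvPolynomial (ι ⊕ ι') ℂ))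
            ≤ Subalgebra.toSubmodule j.range := by
          rw [Submodule.span_le]
          rintro _ ⟨i', rfl⟩
          exact ⟨X i', by simp [hjdef]⟩
        exact hspan (hlinW k i)
  have hkey : ∀ (k : K) (p : MvPolynomial ι ℂ), ρ k (j p) = j (ρW k p) := by
    intro k p
    obtain ⟨q, hq0⟩ := hmem k p
    have hq : j q = ρ k (j p) := hq0
    have h1 : r (ρ k (j p)) = ρW k p := by rw [hres k (j p), hrj]
    have h2 : r (ρ k (j p)) = q := by rw [← hq, hrj]
    rw [← hq, h2.symm, h1]
  -- the copy of `U` inside `ℂ[V]` given by `j`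
  set U' : Submodule ℂ (MvPolynomial (ι ⊕ ι') ℂ) := U.map j.toLinearMap with hU'def
  have hU'inv : ∀ (k : K) p, p ∈ U' → ρ k p ∈ U' := by
    rintro k p ⟨q, hq, rfl⟩
    exact ⟨ρW k q, hUinv k q hq, (hkey k q).symm⟩
  have hU'ne : U' ≠ ⊥ := by
    obtain ⟨q, hq, hq0⟩ := Submodule.exists_mem_ne_zero_of_ne_bot hUne
    intro hbot
    have : j q ∈ U' := ⟨q, hq, rfl⟩
    rw [hbot, Submodule.mem_bot] at this
    exact hq0 (hinj (by simpa using this))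
  -- irreducibility of `U'`
  have hU'irr : ∀ W ≤ U', (∀ (k : K) p, p ∈ W → ρ k p ∈ W) → W = ⊥ ∨ W = U' := by
    intro M hMle hMinv
    have hMran : ∀ p ∈ M, ∃ q ∈ U, j q = p := by
      intro p hp
      obtain ⟨q, hq, rfl⟩ := hMle hp
      exact ⟨q, hq, rfl⟩
    set M' : Submodule ℂ (MvPolynomial ι ℂ) := M.comap j.toLinearMap with hM'def
    have hM'le : M' ≤ U := by
      intro q hq
      obtain ⟨q', hq', hq'eq⟩ := hMran (j q) hq
      rwa [← hinj hq'eq]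
    have hM'inv : ∀ (k : K) q, q ∈ M' → ρW k q ∈ M' := by
      intro k q hq
      have : ρ k (j q) ∈ M := hMinv k (j q) hq
      rwa [hkey k q] at this
    rcases hUirr M' hM'le hM'inv with hbot | htop
    · left
      rw [Submodule.eq_bot_iff]
      intro p hp
      obtain ⟨q, _, rfl⟩ := hMran p hp
      have : q ∈ M' := hp
      rw [hbot, Submodule.mem_bot] at this
      rw [this, map_zero]
    · right
      refine le_antisymm hMle ?_
      rintro p ⟨q, hq, rfl⟩
      have : q ∈ M' := htop ▸ hq
      exact this
  -- irreducibility of `Ubig`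
  have hUbigirr : ∀ W ≤ Ubig, (∀ (k : K) p, p ∈ W → ρ k p ∈ W) → W = ⊥ ∨ W = Ubig := by
    intro M hMle hMinv
    set Φ : Submodule ℂ (MvPolynomial ι ℂ) :=
      ((M.comap Ubig.subtype).map e.toLinearMap).map U.subtype with hΦdef
    have hΦle : Φ ≤ U := by
      rintro _ ⟨x, _, rfl⟩
      exact x.2
    have hΦmem : ∀ p (hp : p ∈ Ubig), p ∈ M → (e ⟨p, hp⟩ : MvPolynomial ι ℂ) ∈ Φ := by
      intro p hp hpM
      exact ⟨e ⟨p, hp⟩, ⟨⟨p, hp⟩, hpM, rfl⟩, rfl⟩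
    have hΦinv : ∀ (k : K) q, q ∈ Φ → ρW k q ∈ Φ := by
      rintro k _ ⟨x, ⟨y, hyM, rfl⟩, rfl⟩
      have h1 : (e ⟨ρ k (y : MvPolynomial (ι ⊕ ι') ℂ), hUbiginv k y y.2⟩ : MvPolynomial ι ℂ)
          = ρW k (e ⟨(y : MvPolynomial (ι ⊕ ι') ℂ), y.2⟩) := he k y y.2
      have h2 : (⟨(y : MvPolynomial (ι ⊕ ι') ℂ), y.2⟩ : Ubig) = y := rfl
      rw [h2] at h1
      show ρW k ((e y : MvPolynomial ι ℂ)) ∈ Φ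
      rw [← h1]
      exact hΦmem _ _ (hMinv k _ hyM)
    rcases hUirr Φ hΦle hΦinv with hbot | htop
    · left
      rw [Submodule.eq_bot_iff]
      intro p hp
      have hpB : p ∈ Ubig := hMle hp
      have : (e ⟨p, hpB⟩ : MvPolynomial ι ℂ) ∈ Φ := hΦmem p hpB hp
      rw [hbot, Submodule.mem_bot] at this
      have hz : e ⟨p, hpB⟩ = 0 := Subtype.ext this
      have : (⟨p, hpB⟩ : Ubig) = 0 := by
        apply e.injective
        rw [hz, map_zero]
      exact congrArg Subtype.val this
    · right
      refine le_antisymm hMle ?_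
      intro p hp
      have hm : (e ⟨p, hp⟩ : MvPolynomial ι ℂ) ∈ Φ := by
        rw [htop]; exact (e ⟨p, hp⟩).2
      obtain ⟨x, ⟨y, hyM, rfl⟩, hval⟩ := hm
      have hx : e y = e ⟨p, hp⟩ := Subtype.ext hval
      have hy : y = ⟨p, hp⟩ := e.injective hx
      have hyM' : (y : MvPolynomial (ι ⊕ ι') ℂ) ∈ M := hyM
      rw [hy] at hyM'
      exact hyM'
  -- the equivariant isomorphism `U' ≃ Ubig`
  have hg : ∃ g : U' ≃ₗ[ℂ] Ubig, ∀ (k : K) p (hp : p ∈ U'),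
      (g ⟨ρ k p, hU'inv k p hp⟩ : MvPolynomial (ι ⊕ ι') ℂ) = ρ k (g ⟨p, hp⟩) := by
    set em : U ≃ₗ[ℂ] U' := Submodule.equivMapOfInjective j.toLinearMap hinj U with hemdef
    have hem : ∀ (q : U), ((em q : MvPolynomial (ι ⊕ ι') ℂ)) = j q := fun q => rfl
    refine ⟨em.symm.trans e.symm, ?_⟩
    intro k p hp
    obtain ⟨q, hq, rfl⟩ := hp
    have hp' : j q ∈ U' := ⟨q, hq, rfl⟩
    -- compute em.symm on both elements
    have hsym1 : em.symm ⟨j q, hp'⟩ = ⟨q, hq⟩ := by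
      apply em.injective
      rw [em.apply_symm_apply]
      exact Subtype.ext (hem ⟨q, hq⟩).symm
    have hρ : ρ k (j q) = j (ρW k q) := hkey k q
    have hp'' : ρ k (j q) ∈ U' := hU'inv k (j q) hp'
    have hsym2 : em.symm ⟨ρ k (j q), hp''⟩ = ⟨ρW k q, hUinv k q hq⟩ := by
      apply em.injective
      rw [em.apply_symm_apply]
      refine Subtype.ext ?_
      show ρ k (j q) = ((em ⟨ρW k q, hUinv k q hq⟩ : U') : MvPolynomial (ι ⊕ ι') ℂ)
      rw [hρ]
      exact (hem ⟨ρW k q, hUinv k q hq⟩).symm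
    simp only [LinearEquiv.trans_apply,
      show (j.toLinearMap q : MvPolynomial (ι ⊕ ι') ℂ) = j q from rfl]
    rw [hsym1, hsym2]
    -- now need: (e.symm ⟨ρW k q, _⟩ : big) = ρ k (e.symm ⟨q, hq⟩ : big)
    set x : Ubig := e.symm ⟨q, hq⟩ with hxdef
    have hex : e x = ⟨q, hq⟩ := e.apply_symm_apply _
    have hx2 : (e ⟨ρ k (x : MvPolynomial (ι ⊕ ι') ℂ), hUbiginv k x x.2⟩ : MvPolynomial ι ℂ)
        = ρW k (e ⟨(x : MvPolynomial (ι ⊕ ι') ℂ), x.2⟩) := he k x x.2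
    have hx3 : (⟨(x : MvPolynomial (ι ⊕ ι') ℂ), x.2⟩ : Ubig) = x := rfl
    rw [hx3, hex] at hx2
    have hfin : e.symm ⟨ρW k q, hUinv k q hq⟩
        = ⟨ρ k (x : MvPolynomial (ι ⊕ ι') ℂ), hUbiginv k x x.2⟩ := by
      apply e.injective
      rw [e.apply_symm_apply]
      exact Subtype.ext hx2.symm
    rw [hfin]
  -- multiplicity freeness gives `U' = Ubig`
  have heq : U' = Ubig := hmf U' Ubig hU'inv hUbiginv hU'irr hUbigirr hU'ne hg
  intro p hp
  rw [← heq] at hp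
  obtain ⟨q, hq, rfl⟩ := hp
  constructor
  · exact (hUhom q hq).rename_isHomogeneous
  · exact ⟨q, rfl⟩
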